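/- For all n, r ∈ ℕ with 0 ≤ r ≤ n, every real α and every real x, one has C(n,r)·E^{(α)}_{n−r}(x) = F_{n−r+1} + [(r+1)x − ((r+1)α + 2)/2]·F_{n−r} + Σ_{k=r+2}^{n} C(k,r)·{E^{(α)}_{k−r}(x) − ((k−r)/k)·[E^{(α)}_{k−r−1}(x) + ((k−r−1)/(k−1))·E^{(α)}_{k−r−2}(x)]}·F_{n−k+1}, and also C(n,r)·E^{(α)}_{n−r}(x) = F_{n−r+1} + [n(x − α/2) − 1]·F_{n−r} + Σ_{k=0}^{n−2} C(n,k)·{E^{(α)}_{n−k}(x) − ((n−k)/(k+1))·[E^{(α)}_{n−k−1}(x) + ((n−k−1)/(k+2))·E^{(α)}_{n−k−2}(x)]}·F_{k−r+1}, where F_m := 0 for integers m ≤ 0. -/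

import Mathlib

noncomputable section

/-- `E α x k` is the generalized Euler polynomial `E_k^{(α)}(x)`, characterized by the
generating function `(2/(e^z+1))^α e^{xz} = Σ_k E_k^{(α)}(x) z^k / k!` for `|z| < π`. -/
def IsGenEulerFamily (E : ℝ → ℝ → ℕ → ℝ) : Prop :=
  ∀ α x z : ℝ, |z| < Real.pi →
    HasSum (fun k : ℕ => E α x k * z ^ k / (Nat.factorial k : ℝ))
      ((2 / (Real.exp z + 1)) ^ α * Real.exp (x * z))

/-- The Fibonacci sequence extended to the integers by `F_m = 0` for `m ≤ 0`. -/
def fibZ (m : ℤ) : ℝ := if 0 < m then (Nat.fib m.toNat : ℝ) else 0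

lemma euler_zero (E : ℝ → ℝ → ℕ → ℝ) (hE : IsGenEulerFamily E) (α x : ℝ) :
    E α x 0 = 1 := by
  have h0 := hE α x 0 (by simpa using Real.pi_pos)
  have h0' : HasSum (fun k : ℕ => E α x k * (0:ℝ) ^ k / (Nat.factorial k : ℝ)) (E α x 0) := by
    have := hasSum_single (f := fun k : ℕ => E α x k * (0:ℝ) ^ k / (Nat.factorial k : ℝ)) 0
      (fun b hb => by simp [zero_pow hb])
    simpa using this
  rw [h0'.unique h0, Real.exp_zero]
  norm_num [show ((2:ℝ)/(1+1)) = 1 by norm_num, Real.one_rpow]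

lemma euler_one (E : ℝ → ℝ → ℕ → ℝ) (hE : IsGenEulerFamily E) (α x : ℝ) :
    E α x 1 = x - α / 2 := by
  set f : ℝ → ℝ := fun z => (2 / (Real.exp z + 1)) ^ α * Real.exp (x * z) with hfdef
  have hexp : HasDerivAt (fun z => Real.exp z + 1) (Real.exp 0) 0 :=
    (Real.hasDerivAt_exp 0).add_const 1
  have hbase : HasDerivAt (fun z => 2 / (Real.exp z + 1)) (-(1/2)) 0 := by
    have h := (hasDerivAt_const (0:ℝ) (2:ℝ)).div hexp (by positivity)
    refine h.congr_deriv ?_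
    simp [Real.exp_zero]
    norm_num
  have hpow : HasDerivAt (fun z => (2 / (Real.exp z + 1)) ^ α) (-(α/2)) 0 := by
    have h := hbase.rpow_const (p := α) (Or.inl (by norm_num [Real.exp_zero]))
    convert h using 1
    simp [Real.exp_zero]
    norm_num [Real.one_rpow]
    ring
  have hexp2 : HasDerivAt (fun z => Real.exp (x * z)) x 0 := by
    have h := ((hasDerivAt_id (0:ℝ)).const_mul x).exp
    refine h.congr_deriv ?_
    simp
  have hf : HasDerivAt f (x - α/2) 0 := by
    have h := hpow.mul hexp2
    refine h.congr_deriv ?_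
    simp only [mul_zero, Real.exp_zero, show ((2:ℝ)/(1+1)) = 1 by norm_num, Real.one_rpow]
    ring
  set p : FormalMultilinearSeries ℝ ℝ ℝ :=
    fun n => ContinuousMultilinearMap.mkPiRing ℝ (Fin n) (E α x n / (Nat.factorial n : ℝ)) with hp
  have hpi1 : (1:ℝ) < Real.pi := by linarith [Real.pi_gt_three]
  have hsum1 : Summable fun n : ℕ => |E α x n * (1:ℝ) ^ n / (Nat.factorial n : ℝ)| :=
    (hE α x 1 (by rw [abs_one]; exact hpi1)).summable.abs
  have hrad : (1 : ENNReal) ≤ p.radius := by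
    have : Summable fun n : ℕ => ‖p n‖ * (1:ℝ) ^ n := by
      simp only [hp, ContinuousMultilinearMap.norm_mkPiRing, one_pow, mul_one]
      refine hsum1.congr fun n => ?_
      simp [Real.norm_eq_abs, abs_div, Nat.abs_cast]
    simpa using p.le_radius_of_summable (r := 1) (by simpa using this)
  have hps : HasFPowerSeriesOnBall f p 0 1 := by
    refine ⟨hrad, by norm_num, fun {y} hy => ?_⟩
    have hy1 : |y| < 1 := by
      rw [EMetric.mem_ball, edist_zero_right, enorm_eq_nnnorm] at hy
      simpa [Real.norm_eq_abs] using (NNReal.coe_lt_coe.mpr (by exact_mod_cast hy : ‖y‖₊ < (1:NNReal)))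
    have := hE α x y (lt_trans hy1 hpi1)
    rw [zero_add]
    convert this using 2 with n
    · rfl
    simp [p, ContinuousMultilinearMap.mkPiRing_apply, smul_eq_mul]
    ring
  have hd := hps.hasFPowerSeriesAt.hasDerivAt
  have hone : (p 1 fun _ => (1:ℝ)) = E α x 1 := by
    simp [hp, ContinuousMultilinearMap.mkPiRing_apply]
  rw [hone] at hd
  exact (hd.unique hf)

lemma fibZ_nonpos {m : ℤ} (h : m ≤ 0) : fibZ m = 0 := if_neg (not_lt.2 h)

lemma fibZ_natCast (s : ℕ) : fibZ (s : ℤ) = (Nat.fib s : ℝ) := by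
  rcases Nat.eq_zero_or_pos s with h | h
  · simp [h, fibZ]
  · rw [fibZ, if_pos (by exact_mod_cast h)]
    simp

lemma fibZ_rec (t : ℤ) (ht : 0 ≤ t) : fibZ (t + 2) = fibZ (t + 1) + fibZ t := by
  obtain ⟨s, rfl⟩ := Int.eq_ofNat_of_zero_le ht
  have h2 : ((s : ℤ) + 2) = ((s + 2 : ℕ) : ℤ) := by push_cast; ring
  have h1 : ((s : ℤ) + 1) = ((s + 1 : ℕ) : ℤ) := by push_cast; ring
  rw [h2, h1, fibZ_natCast, fibZ_natCast, fibZ_natCast, Nat.fib_add_two]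
  push_cast; ring

lemma fibZ_one : fibZ 1 = 1 := by norm_num [fibZ]
lemma fibZ_two : fibZ 2 = 1 := by
  rw [show (2:ℤ) = ((2:ℕ):ℤ) by norm_num, fibZ_natCast]; norm_num

lemma core (c : ℕ → ℝ) : ∀ m : ℕ,
    c m = c 0 * fibZ ((m : ℤ) + 1) + (c 1 - c 0) * fibZ (m : ℤ)
      + ∑ j ∈ Finset.Icc 2 m, (c j - c (j-1) - c (j-2)) * fibZ ((m : ℤ) - j + 1) := by
  intro m
  induction m using Nat.strong_induction_on with
  | _ m ih =>
    match m, ih with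
    | 0, _ => simp [fibZ_one, fibZ_nonpos (le_refl (0:ℤ))]
    | 1, _ => norm_num [fibZ_one, fibZ_two]
    | (k+2), ih =>
      have h1 := ih (k+1) (by omega)
      have h0 := ih k (by omega)
      rw [Finset.sum_Icc_succ_top (by omega : 2 ≤ k+2)]
      push_cast at h1 h0 ⊢
      have hsplit : ∀ j ∈ Finset.Icc 2 (k+1),
          (c j - c (j-1) - c (j-2)) * fibZ ((k:ℤ) + 2 - j + 1)
            = (c j - c (j-1) - c (j-2)) * fibZ ((k:ℤ) + 1 - j + 1)
              + (c j - c (j-1) - c (j-2)) * fibZ ((k:ℤ) - j + 1) := by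
        intro j hj
        simp only [Finset.mem_Icc] at hj
        have e : (k:ℤ) + 2 - j + 1 = ((k:ℤ) - j + 1) + 2 := by ring
        have e1 : (k:ℤ) + 1 - j + 1 = ((k:ℤ) - j + 1) + 1 := by ring
        rw [e, e1, fibZ_rec _ (by omega)]
        ring
      rw [Finset.sum_congr rfl hsplit, Finset.sum_add_distrib]
      have hsub : ∑ j ∈ Finset.Icc 2 (k+1), (c j - c (j-1) - c (j-2)) * fibZ ((k:ℤ) - j + 1)
          = ∑ j ∈ Finset.Icc 2 k, (c j - c (j-1) - c (j-2)) * fibZ ((k:ℤ) - j + 1) := by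
        refine (Finset.sum_subset (Finset.Icc_subset_Icc_right (by omega)) ?_).symm
        intro j hj hj'
        simp only [Finset.mem_Icc] at hj hj'
        have hj2 : j = k + 1 := by omega
        subst hj2
        rw [fibZ_nonpos (by omega)]
        ring
      rw [hsub]
      rw [show ((k:ℤ)+1+1) = (k:ℤ)+2 by ring] at h1
      have hf2 : fibZ ((k:ℤ)+2+1) = fibZ ((k:ℤ)+2) + fibZ ((k:ℤ)+1) := by
        have h := fibZ_rec ((k:ℤ)+1) (by positivity)
        rw [show ((k:ℤ)+1+2) = (k:ℤ)+2+1 by ring, show ((k:ℤ)+1+1) = (k:ℤ)+2 by ring] at h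
        exact h
      have hf1 : fibZ ((k:ℤ)+2) = fibZ ((k:ℤ)+1) + fibZ (k:ℤ) := fibZ_rec (k:ℤ) (by positivity)
      rw [show k+1+1 = k+2 by omega]
      have hlast : fibZ ((k:ℤ) + 2 - ((k:ℤ) + 1 + 1) + 1) = 1 := by
        rw [show ((k:ℤ) + 2 - ((k:ℤ) + 1 + 1) + 1) = 1 by ring, fibZ_one]
      rw [hlast]
      linear_combination h1 + h0 - c 0 * hf2 + (c 0 - c 1) * hf1

lemma core' (c : ℕ → ℝ) (m M : ℕ) (h : m ≤ M) :
    c m = c 0 * fibZ ((m:ℤ)+1) + (c 1 - c 0) * fibZ (m:ℤ)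
      + ∑ j ∈ Finset.Icc 2 M, (c j - c (j-1) - c (j-2)) * fibZ ((m:ℤ) - j + 1) := by
  rw [← Finset.sum_subset (Finset.Icc_subset_Icc_right h)
    (fun j hj hj' => by
      simp only [Finset.mem_Icc] at hj hj'
      rw [fibZ_nonpos (by omega)]
      ring)]
  exact core c m

lemma nat_step (s r : ℕ) : (s+1+r).choose r * (s+1) = (s+1+r) * ((s+r).choose r) := by
  have h1 : (s+r+1) * ((s+r).choose r) = (s+r+1).choose (r+1) * (r+1) := by
    simpa [Nat.succ_eq_add_one] using Nat.add_one_mul_choose_eq (s+r) r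
  have h2 := Nat.choose_succ_right_eq (s+r+1) r
  rw [show s+r+1-r = s+1 by omega] at h2
  rw [show s+1+r = s+r+1 by omega, ← h2, ← h1]

theorem euler_fibonacci_identity (E : ℝ → ℝ → ℕ → ℝ) (hE : IsGenEulerFamily E)
    (n r : ℕ) (hrn : r ≤ n) (α x : ℝ) :
    (Nat.choose n r : ℝ) * E α x (n - r)
      = fibZ ((n : ℤ) - r + 1)
        + (((r : ℝ) + 1) * x - (((r : ℝ) + 1) * α + 2) / 2) * fibZ ((n : ℤ) - r)
        + ∑ k ∈ Finset.Icc (r + 2) n,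
            (Nat.choose k r : ℝ) *
              (E α x (k - r)
                - ((k : ℝ) - r) / k *
                  (E α x (k - r - 1)
                    + ((k : ℝ) - r - 1) / ((k : ℝ) - 1) * E α x (k - r - 2))) *
              fibZ ((n : ℤ) - k + 1) ∧
    (Nat.choose n r : ℝ) * E α x (n - r)
      = fibZ ((n : ℤ) - r + 1)
        + ((n : ℝ) * (x - α / 2) - 1) * fibZ ((n : ℤ) - r)
        + ∑ k ∈ Finset.range (n - 1),
            (Nat.choose n k : ℝ) *
              (E α x (n - k)
                - ((n : ℝ) - k) / ((k : ℝ) + 1) *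
                  (E α x (n - k - 1)
                    + ((n : ℝ) - k - 1) / ((k : ℝ) + 2) * E α x (n - k - 2))) *
              fibZ ((k : ℤ) - r + 1) := by
  have hE0 := euler_zero E hE α x
  have hE1 := euler_one E hE α x
  have hcast : ((n - r : ℕ) : ℤ) = (n:ℤ) - r := by omega
  constructor
  · -- first identity
    set c : ℕ → ℝ := fun j => ((j + r).choose r : ℝ) * E α x j with hc
    have hc0 : c 0 = 1 := by simp [hc, hE0]
    have hc1 : c 1 = ((r:ℝ)+1) * (x - α/2) := by
      have h : (1+r).choose r = r+1 := by rw [add_comm]; exact Nat.choose_succ_self_right r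
      simp only [hc, h, hE1]
      push_cast; ring
    have hcm : (n.choose r : ℝ) * E α x (n - r) = c (n - r) := by
      simp [hc, Nat.sub_add_cancel hrn]
    have hsum1eq : ∑ k ∈ Finset.Icc (r + 2) n,
            (Nat.choose k r : ℝ) *
              (E α x (k - r)
                - ((k : ℝ) - r) / k *
                  (E α x (k - r - 1)
                    + ((k : ℝ) - r - 1) / ((k : ℝ) - 1) * E α x (k - r - 2))) *
              fibZ ((n : ℤ) - k + 1)
        = ∑ j ∈ Finset.Icc 2 (n-r), (c j - c (j-1) - c (j-2)) * fibZ ((n:ℤ) - r - j + 1) := by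
      rw [show Finset.Icc (r+2) n = (Finset.Icc 2 (n-r)).map (addRightEmbedding r) by
        rw [Finset.map_add_right_Icc]; congr 1 <;> omega]
      rw [Finset.sum_map]
      refine Finset.sum_congr rfl fun j hj => ?_
      simp only [Finset.mem_Icc] at hj
      obtain ⟨hj2, hjn⟩ := hj
      simp only [addRightEmbedding_apply]
      rw [show ((n:ℤ) - ↑(j + r) + 1) = ((n:ℤ) - r - j + 1) by push_cast; ring,
        show j + r - r = j by omega]
      have e1 : ((j + r : ℕ) : ℝ) - (r:ℝ) = (j:ℝ) := by push_cast; ring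
      have e2 : ((j + r : ℕ) : ℝ) = (j:ℝ) + (r:ℝ) := by push_cast; ring
      rw [e1, e2]
      congr 1
      -- key factor identity
      have f1 : ((j+r).choose r : ℝ) * (j:ℝ) = ((j:ℝ)+(r:ℝ)) * ((j-1+r).choose r : ℝ) := by
        have h := nat_step (j-1) r
        rw [show j-1+1 = j by omega] at h
        exact_mod_cast h
      have f2 : ((j-1+r).choose r : ℝ) * ((j:ℝ)-1) = ((j:ℝ)+(r:ℝ)-1) * ((j-2+r).choose r : ℝ) := by
        have h := nat_step (j-2) r
        rw [show j-2+1 = j-1 by omega] at h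
        have hc1 : ((j-1:ℕ) : ℝ) = (j:ℝ) - 1 := by
          rw [Nat.cast_sub (by omega)]; norm_num
        have hc2 : ((j-1+r:ℕ) : ℝ) = (j:ℝ) + (r:ℝ) - 1 := by
          rw [show j-1+r = j+r-1 by omega, Nat.cast_sub (by omega)]; push_cast; ring
        calc ((j-1+r).choose r : ℝ) * ((j:ℝ)-1)
            = ((j-1+r).choose r : ℝ) * ((j-1:ℕ):ℝ) := by rw [hc1]
          _ = ((j-1+r:ℕ):ℝ) * ((j-2+r).choose r : ℝ) := by exact_mod_cast h
          _ = ((j:ℝ)+(r:ℝ)-1) * ((j-2+r).choose r : ℝ) := by rw [hc2]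
      have hb : ((j+r).choose r : ℝ) * ((j:ℝ)/((j:ℝ)+(r:ℝ))) = ((j-1+r).choose r : ℝ) := by
        have hpos : (0:ℝ) < (j:ℝ)+(r:ℝ) := by
          have : (0:ℝ) < (j:ℝ) := by exact_mod_cast (by omega : 0 < j)
          positivity
        field_simp
        linarith [f1]
      have hd : ((j-1+r).choose r : ℝ) * (((j:ℝ)-1)/((j:ℝ)+(r:ℝ)-1)) = ((j-2+r).choose r : ℝ) := by
        have hj1 : (2:ℝ) ≤ (j:ℝ) := by exact_mod_cast hj2
        have hr0 : (0:ℝ) ≤ (r:ℝ) := by positivity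
        have hpos : (0:ℝ) < (j:ℝ)+(r:ℝ)-1 := by linarith
        field_simp
        linarith [f2]
      simp only [hc]
      linear_combination (-(E α x (j-1)) - (((j:ℝ)-1)/((j:ℝ)+(r:ℝ)-1)) * E α x (j-2)) * hb
        + (-(E α x (j-2))) * hd
    rw [hcm, core' c (n-r) (n-r) le_rfl, hc0, hc1, hcast, hsum1eq]
    ring
  · -- second identity
    rcases Nat.eq_zero_or_pos n with hn0 | hn1
    · subst hn0
      have hr0 : r = 0 := by omega
      subst hr0
      simp [hE0, fibZ_one, fibZ_nonpos (le_refl (0:ℤ))]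
    set c : ℕ → ℝ := fun j => (n.choose (n - j) : ℝ) * E α x j with hc
    have hc0 : c 0 = 1 := by simp [hc, hE0]
    have hc1 : c 1 = (n:ℝ) * (x - α/2) := by
      have h : n.choose (n-1) = n := by
        rw [Nat.choose_symm (by omega : 1 ≤ n)]
        exact Nat.choose_one_right n
      simp only [hc, h, hE1]
    have hcm : (n.choose r : ℝ) * E α x (n - r) = c (n - r) := by
      simp only [hc, show n - (n - r) = r by omega]
    have hsum2eq : ∑ k ∈ Finset.range (n - 1),
            (Nat.choose n k : ℝ) *
              (E α x (n - k)
                - ((n : ℝ) - k) / ((k : ℝ) + 1) *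
                  (E α x (n - k - 1)
                    + ((n : ℝ) - k - 1) / ((k : ℝ) + 2) * E α x (n - k - 2))) *
              fibZ ((k : ℤ) - r + 1)
        = ∑ j ∈ Finset.Icc 2 n, (c j - c (j-1) - c (j-2)) * fibZ ((n:ℤ) - r - j + 1) := by
      refine Finset.sum_nbij' (i := fun k => n - k) (j := fun j => n - j)
        (fun k hk => ?_) (fun j hj => ?_) (fun k hk => ?_) (fun j hj => ?_) (fun k hk => ?_)
      · simp only [Finset.mem_range] at hk; simp only [Finset.mem_Icc]; omega
      · simp only [Finset.mem_Icc] at hj; simp only [Finset.mem_range]; omega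
      · simp only [Finset.mem_range] at hk; show n - (n - k) = k; omega
      · simp only [Finset.mem_Icc] at hj; show n - (n - j) = j; omega
      · simp only [Finset.mem_range] at hk
        have hkn : k + 2 ≤ n := by omega
        beta_reduce
        rw [show ((n:ℤ) - r - ↑(n - k) + 1) = ((k:ℤ) - r + 1) by omega]
        congr 1
        simp only [hc]
        rw [show n - (n - k) = k by omega, show n - k - 1 = n - (k+1) by omega,
          show n - (n - (k+1)) = k + 1 by omega,
          show n - k - 2 = n - (k+2) by omega,
          show n - (n - (k+2)) = k + 2 by omega]
        -- now: C(n,k) * (E (n-k) - q (E (n-(k+1)) + p E (n-(k+2)))) = C(n,k) E (n-k) - C(n,k+1) E (n-(k+1)) - C(n,k+2) E (n-(k+2))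
        have f1 : (n.choose (k+1) : ℝ) * ((k:ℝ)+1) = (n.choose k : ℝ) * ((n:ℝ)-(k:ℝ)) := by
          have h := Nat.choose_succ_right_eq n k
          have hcast' : ((n - k : ℕ) : ℝ) = (n:ℝ) - (k:ℝ) := by
            rw [Nat.cast_sub (by omega)]
          calc (n.choose (k+1) : ℝ) * ((k:ℝ)+1) = (((n.choose (k+1)) * (k+1) : ℕ) : ℝ) := by push_cast; ring
            _ = (((n.choose k) * (n - k) : ℕ) : ℝ) := by rw [h]
            _ = (n.choose k : ℝ) * ((n:ℝ)-(k:ℝ)) := by push_cast [hcast']; ring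
        have f2 : (n.choose (k+2) : ℝ) * ((k:ℝ)+2) = (n.choose (k+1) : ℝ) * ((n:ℝ)-(k:ℝ)-1) := by
          have h := Nat.choose_succ_right_eq n (k+1)
          have hcast' : ((n - (k+1) : ℕ) : ℝ) = (n:ℝ) - (k:ℝ) - 1 := by
            rw [Nat.cast_sub (by omega)]; push_cast; ring
          calc (n.choose (k+2) : ℝ) * ((k:ℝ)+2) = (((n.choose (k+1+1)) * (k+1+1) : ℕ) : ℝ) := by push_cast; ring_nf
            _ = (((n.choose (k+1)) * (n - (k+1)) : ℕ) : ℝ) := by rw [h]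
            _ = (n.choose (k+1) : ℝ) * ((n:ℝ)-(k:ℝ)-1) := by push_cast [hcast']; ring
        have hb : (n.choose k : ℝ) * (((n:ℝ)-(k:ℝ))/((k:ℝ)+1)) = (n.choose (k+1) : ℝ) := by
          have hpos : (0:ℝ) < (k:ℝ)+1 := by positivity
          field_simp
          linarith [f1]
        have hd : (n.choose (k+1) : ℝ) * (((n:ℝ)-(k:ℝ)-1)/((k:ℝ)+2)) = (n.choose (k+2) : ℝ) := by
          have hpos : (0:ℝ) < (k:ℝ)+2 := by positivity
          field_simp
          linarith [f2]
        linear_combination (-(E α x (n-(k+1))) - (((n:ℝ)-(k:ℝ)-1)/((k:ℝ)+2)) * E α x (n-(k+2))) * hb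
          + (-(E α x (n-(k+2)))) * hd
    rw [hcm, core' c (n-r) n (Nat.sub_le n r), hc0, hc1, hcast, hsum2eq]
    ring
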